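/- Let d ≥ 3 be an integer and let x be a random vector in ℝ^d whose d coordinates are independent standard Gaussian N(0,1) random variables. Then for every nonzero w ∈ ℝ^d and every real number a, P[ ⟨x, w⟩² < a²·‖x‖² ] ≤ (2√d/√π) · |a| / ‖w‖. -/

import Mathlib

open MeasureTheory ProbabilityTheory Real Filter Set



lemma tendsto_half_exp : Filter.Tendsto (fun x : ℝ => Real.exp (-(1/2:ℝ) * x)) Filter.atTop (nhds 0) := by
  apply Real.tendsto_exp_atBot.comp
  have h := tendsto_neg_atTop_atBot.comp
    (Filter.tendsto_id.atTop_mul_const (show (0:ℝ) < 1/2 by norm_num))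
  exact Filter.Tendsto.congr (fun x => by simp only [Function.comp_apply, id]; ring) h

-- second moment of the standard gaussian density
lemma sq_exp_integral : ∫ x : ℝ, x ^ 2 * Real.exp (-x ^ 2 / 2) = Real.sqrt (2 * Real.pi) := by
  have hexp : Integrable (fun x : ℝ => Real.exp (-(1/2 : ℝ) * x ^ 2)) :=
    integrable_exp_neg_mul_sq (by norm_num)
  have hsq : Integrable (fun x : ℝ => x ^ 2 * Real.exp (-(1/2 : ℝ) * x ^ 2)) := by
    have := integrable_rpow_mul_exp_neg_mul_sq (b := 1/2) (by norm_num) (s := 2) (by norm_num)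
    simpa [Real.rpow_natCast (n := 2)] using this
  have key : (∫ x : ℝ, (x ^ 2 - 1) * Real.exp (-(1/2 : ℝ) * x ^ 2)) = 0 := by
    have hderiv : ∀ x : ℝ, HasDerivAt (fun y : ℝ => -y * Real.exp (-(1/2 : ℝ) * y ^ 2))
        ((x ^ 2 - 1) * Real.exp (-(1/2 : ℝ) * x ^ 2)) x := by
      intro x
      have h1 : HasDerivAt (fun y : ℝ => -(1/2 : ℝ) * y ^ 2) (-x) x := by
        have := (hasDerivAt_pow 2 x).const_mul (-(1/2 : ℝ))
        simpa using this.congr_deriv (by ring)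
      have h2 := (h1.exp).const_mul 1
      have h3 : HasDerivAt (fun y : ℝ => Real.exp (-(1/2 : ℝ) * y ^ 2))
          (Real.exp (-(1/2 : ℝ) * x ^ 2) * (-x)) x := h1.exp
      have h4 : HasDerivAt (fun y : ℝ => -y) (-1) x := (hasDerivAt_id x).neg
      have := h4.mul h3
      exact this.congr_deriv (by ring)
    have hint : Integrable (fun x : ℝ => (x ^ 2 - 1) * Real.exp (-(1/2 : ℝ) * x ^ 2)) := by
      have := hsq.sub hexp
      simpa [sub_mul, Pi.sub_def] using this
    have htop : Tendsto (fun y : ℝ => -y * Real.exp (-(1/2 : ℝ) * y ^ 2)) atTop (nhds 0) := by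
      have h := (rpow_mul_exp_neg_mul_sq_isLittleO_exp_neg (b := 1/2) (by norm_num) 1).isBigO
      have h3 := h.trans_tendsto tendsto_half_exp
      have h4 : Tendsto (fun x : ℝ => x * Real.exp (-(1/2 : ℝ) * x ^ 2)) atTop (nhds 0) := by
        refine h3.congr' ?_
        filter_upwards [eventually_ge_atTop (0:ℝ)] with x hx
        rw [Real.rpow_one]
      simpa using h4.neg
    have hbot : Tendsto (fun y : ℝ => -y * Real.exp (-(1/2 : ℝ) * y ^ 2)) atBot (nhds 0) := by
      have htop' : Tendsto (fun y : ℝ => y * Real.exp (-(1/2 : ℝ) * y ^ 2)) atTop (nhds 0) := by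
        have := (rpow_mul_exp_neg_mul_sq_isLittleO_exp_neg (b := 1/2) (by norm_num) 1).isBigO
        refine (this.trans_tendsto tendsto_half_exp).congr' ?_
        filter_upwards [eventually_ge_atTop (0:ℝ)] with x hx
        rw [Real.rpow_one]
      have : Tendsto (fun y : ℝ => (fun z : ℝ => z * Real.exp (-(1/2 : ℝ) * z ^ 2)) (-y))
          atBot (nhds 0) := htop'.comp tendsto_neg_atBot_atTop
      simpa [neg_neg] using this
    have := integral_of_hasDerivAt_of_tendsto hderiv hint hbot htop
    simpa using this
  have hsplit : (∫ x : ℝ, (x ^ 2 - 1) * Real.exp (-(1/2 : ℝ) * x ^ 2))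
      = (∫ x : ℝ, x ^ 2 * Real.exp (-(1/2 : ℝ) * x ^ 2))
        - ∫ x : ℝ, Real.exp (-(1/2 : ℝ) * x ^ 2) := by
    rw [← integral_sub hsq hexp]
    congr 1 with x
    ring
  have hg : (∫ x : ℝ, Real.exp (-(1/2 : ℝ) * x ^ 2)) = Real.sqrt (2 * Real.pi) := by
    rw [integral_gaussian]
    congr 1
    ring
  have : (∫ x : ℝ, x ^ 2 * Real.exp (-(1/2 : ℝ) * x ^ 2)) = Real.sqrt (2 * Real.pi) := by
    have := key
    rw [hsplit] at this
    linarith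
  rw [← this]
  congr 1 with x
  ring_nf


lemma gaussianPDFReal_zero_one (x : ℝ) :
    gaussianPDFReal 0 1 x = (Real.sqrt (2 * Real.pi))⁻¹ * Real.exp (-x ^ 2 / 2) := by
  simp [gaussianPDFReal, neg_div]

lemma integrable_sq_exp : Integrable (fun x : ℝ => x ^ 2 * Real.exp (-x ^ 2 / 2)) := by
  have h := integrable_rpow_mul_exp_neg_mul_sq (b := 1/2) (by norm_num) (s := 2) (by norm_num)
  have h2 : Integrable (fun x : ℝ => x ^ 2 * Real.exp (-(1/2 : ℝ) * x ^ 2)) := by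
    simpa [Real.rpow_natCast (n := 2)] using h
  refine h2.congr (Filter.Eventually.of_forall fun x => by ring_nf)

-- second moment of standard gaussian
lemma lintegral_sq_gaussian :
    ∫⁻ x : ℝ, ENNReal.ofReal (x ^ 2) ∂(gaussianReal 0 1) = 1 := by
  rw [gaussianReal_of_var_ne_zero 0 one_ne_zero,
    lintegral_withDensity_eq_lintegral_mul _ (measurable_gaussianPDF 0 1)
      (by exact (measurable_id.pow_const 2).ennreal_ofReal)]
  have heq : ∀ x : ℝ, (gaussianPDF 0 1 * fun x => ENNReal.ofReal (x ^ 2)) x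
      = ENNReal.ofReal (gaussianPDFReal 0 1 x * x ^ 2) := by
    intro x
    simp [gaussianPDF, ENNReal.ofReal_mul (gaussianPDFReal_nonneg 0 1 x)]
  simp_rw [heq]
  have hint : Integrable (fun x : ℝ => gaussianPDFReal 0 1 x * x ^ 2) := by
    refine (integrable_sq_exp.const_mul (Real.sqrt (2 * Real.pi))⁻¹).congr
      (Filter.Eventually.of_forall fun x => ?_)
    show (Real.sqrt (2 * Real.pi))⁻¹ * (x ^ 2 * Real.exp (-x ^ 2 / 2)) = gaussianPDFReal 0 1 x * x ^ 2
    rw [gaussianPDFReal_zero_one]; ring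
  rw [← ofReal_integral_eq_lintegral_ofReal hint
    (Filter.Eventually.of_forall fun x => mul_nonneg (gaussianPDFReal_nonneg 0 1 x) (sq_nonneg x))]
  have : (∫ x : ℝ, gaussianPDFReal 0 1 x * x ^ 2)
      = (Real.sqrt (2 * Real.pi))⁻¹ * ∫ x : ℝ, x ^ 2 * Real.exp (-x ^ 2 / 2) := by
    rw [← integral_const_mul]
    congr 1 with x
    rw [gaussianPDFReal_zero_one]; ring
  rw [this, sq_exp_integral, inv_mul_cancel₀ (by positivity), ENNReal.ofReal_one]

lemma gaussianPDF_le (x : ℝ) :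
    gaussianPDF 0 1 x ≤ ENNReal.ofReal (Real.sqrt (2 * Real.pi))⁻¹ := by
  refine ENNReal.ofReal_le_ofReal ?_
  rw [gaussianPDFReal_zero_one]
  calc (Real.sqrt (2 * Real.pi))⁻¹ * Real.exp (-x ^ 2 / 2)
      ≤ (Real.sqrt (2 * Real.pi))⁻¹ * 1 := by
        refine mul_le_mul_of_nonneg_left ?_ (by positivity)
        exact Real.exp_le_one_iff.2 (by nlinarith [sq_nonneg x])
    _ = _ := mul_one _

lemma gaussian_anticoncentration (r : ℝ) :
    gaussianReal 0 1 {x : ℝ | x ^ 2 < r} ≤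
      ENNReal.ofReal (2 * Real.sqrt r / Real.sqrt (2 * Real.pi)) := by
  by_cases hr : 0 < r
  · have hsub : {x : ℝ | x ^ 2 < r} ⊆ Ioo (-Real.sqrt r) (Real.sqrt r) := by
      intro x hx
      have habs : |x| < Real.sqrt r := by
        rw [← Real.sqrt_sq_eq_abs]
        exact Real.sqrt_lt_sqrt (sq_nonneg x) hx
      exact ⟨neg_lt_of_abs_lt habs, lt_of_abs_lt habs⟩
    calc gaussianReal 0 1 {x : ℝ | x ^ 2 < r}
        ≤ gaussianReal 0 1 (Ioo (-Real.sqrt r) (Real.sqrt r)) := measure_mono hsub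
      _ = ∫⁻ x in Ioo (-Real.sqrt r) (Real.sqrt r), gaussianPDF 0 1 x :=
          gaussianReal_apply 0 one_ne_zero _
      _ ≤ ∫⁻ _x in Ioo (-Real.sqrt r) (Real.sqrt r),
            ENNReal.ofReal (Real.sqrt (2 * Real.pi))⁻¹ :=
          lintegral_mono fun x => gaussianPDF_le x
      _ = ENNReal.ofReal (Real.sqrt (2 * Real.pi))⁻¹ * volume (Ioo (-Real.sqrt r) (Real.sqrt r)) := by
          rw [setLIntegral_const]
      _ = ENNReal.ofReal (2 * Real.sqrt r / Real.sqrt (2 * Real.pi)) := by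
          rw [Real.volume_Ioo, ← ENNReal.ofReal_mul (by positivity)]
          congr 1
          have : Real.sqrt r - -Real.sqrt r = 2 * Real.sqrt r := by ring
          rw [this]
          ring
  · have : {x : ℝ | x ^ 2 < r} = ∅ := by
      ext x; simp only [mem_setOf_eq, mem_empty_iff_false, iff_false, not_lt]
      exact le_trans (not_lt.1 hr) (sq_nonneg x)
    rw [this]
    simp


noncomputable def gdens (d : ℕ) : (Fin d → ℝ) → ENNReal :=
  fun x => ENNReal.ofReal (∏ i, gaussianPDFReal 0 1 (x i))

lemma gdens_measurable (d : ℕ) : Measurable (gdens d) := by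
  apply Measurable.ennreal_ofReal
  exact Finset.measurable_prod _ fun i _ =>
    (measurable_gaussianPDFReal 0 1).comp (measurable_pi_apply i)

-- the product of densities depends only on the sum of squares
lemma prod_pdf_eq (d : ℕ) (x : Fin d → ℝ) :
    (∏ i, gaussianPDFReal 0 1 (x i))
      = (Real.sqrt (2 * Real.pi))⁻¹ ^ d * Real.exp (-(∑ i, (x i) ^ 2) / 2) := by
  simp_rw [gaussianPDFReal_zero_one]
  rw [Finset.prod_mul_distrib, Finset.prod_const, ← Real.exp_sum]
  simp [Finset.sum_div, Finset.sum_neg_distrib, neg_div]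

-- gaussianReal of a set as ofReal of an integral of an indicator
lemma gaussianReal_eq_ofReal_integral {s : Set ℝ} (hs : MeasurableSet s) :
    gaussianReal 0 1 s = ENNReal.ofReal (∫ x, s.indicator (gaussianPDFReal 0 1) x) := by
  rw [gaussianReal_apply 0 one_ne_zero s,
    ofReal_integral_eq_lintegral_ofReal
      ((integrable_gaussianPDFReal 0 1).indicator hs)
      (Filter.Eventually.of_forall fun x =>
        Set.indicator_nonneg (fun y _ => gaussianPDFReal_nonneg 0 1 y) x)]
  rw [← lintegral_indicator hs _]
  congr 1 with x
  by_cases hx : x ∈ s <;> simp [hx, gaussianPDF]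

lemma pi_gauss_eq (d : ℕ) :
    Measure.pi (fun _ : Fin d => gaussianReal 0 1)
      = (volume : Measure (Fin d → ℝ)).withDensity (gdens d) := by
  refine Measure.pi_eq fun s hs => ?_
  rw [withDensity_apply _ (MeasurableSet.univ_pi hs)]
  set h : Fin d → ℝ → ℝ := fun i => (s i).indicator (gaussianPDFReal 0 1) with hh
  have hind : ∀ x : Fin d → ℝ,
      (Set.univ.pi s).indicator (gdens d) x = ENNReal.ofReal (∏ i, h i (x i)) := by
    intro x
    by_cases hx : x ∈ Set.univ.pi s
    · rw [Set.indicator_of_mem hx]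
      unfold gdens
      congr 1
      exact Finset.prod_congr rfl fun i _ =>
        (Set.indicator_of_mem (hx i (Set.mem_univ i)) _).symm
    · rw [Set.indicator_of_notMem hx]
      rw [Set.mem_univ_pi] at hx
      push_neg at hx
      obtain ⟨i, hi⟩ := hx
      have : h i (x i) = 0 := Set.indicator_of_notMem hi _
      rw [Finset.prod_eq_zero (Finset.mem_univ i) this, ENNReal.ofReal_zero]
  rw [← lintegral_indicator (MeasurableSet.univ_pi hs) _]
  simp_rw [hind]
  have hint : ∀ i, Integrable (h i) := fun i =>
    (integrable_gaussianPDFReal 0 1).indicator (hs i)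
  rw [volume_pi]
  rw [← ofReal_integral_eq_lintegral_ofReal (Integrable.fintype_prod hint)
    (Filter.Eventually.of_forall fun x => Finset.prod_nonneg fun i _ =>
      Set.indicator_nonneg (fun y _ => gaussianPDFReal_nonneg 0 1 y) _)]
  rw [MeasureTheory.integral_fintype_prod_eq_prod (f := h)]
  rw [ENNReal.ofReal_prod_of_nonneg fun i _ => integral_nonneg
    (fun x => Set.indicator_nonneg (fun y _ => gaussianPDFReal_nonneg 0 1 y) _)]
  exact Finset.prod_congr rfl fun i _ => (gaussianReal_eq_ofReal_integral (hs i)).symm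


noncomputable def rotT (d : ℕ) (b : OrthonormalBasis (Fin d) ℝ (EuclideanSpace ℝ (Fin d))) :
    (Fin d → ℝ) ≃ᵐ (Fin d → ℝ) :=
  ((MeasurableEquiv.toLp 2 (Fin d → ℝ)).trans b.measurableEquiv).trans
    (MeasurableEquiv.toLp 2 (Fin d → ℝ)).symm

lemma rotT_apply (d : ℕ) (b : OrthonormalBasis (Fin d) ℝ (EuclideanSpace ℝ (Fin d)))
    (x : Fin d → ℝ) (i : Fin d) :
    rotT d b x i = b.repr ((MeasurableEquiv.toLp 2 (Fin d → ℝ)) x) i := rfl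

lemma sum_sq_eucl (d : ℕ) (y : EuclideanSpace ℝ (Fin d)) :
    ∑ i, (y i) ^ 2 = ‖y‖ ^ 2 := by
  rw [EuclideanSpace.norm_eq, Real.sq_sqrt (by positivity)]
  simp [sq_abs]

lemma sum_sq_rotT (d : ℕ) (b : OrthonormalBasis (Fin d) ℝ (EuclideanSpace ℝ (Fin d)))
    (x : Fin d → ℝ) :
    ∑ i, (rotT d b x i) ^ 2 = ∑ i, (x i) ^ 2 := by
  simp_rw [rotT_apply]
  set y := (MeasurableEquiv.toLp 2 (Fin d → ℝ)) x with hy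
  have h1 : ∑ i, (b.repr y i) ^ 2 = ‖b.repr y‖ ^ 2 := sum_sq_eucl d (b.repr y)
  have h2 : ∑ i, (y i) ^ 2 = ‖y‖ ^ 2 := sum_sq_eucl d y
  have h3 : ∀ i, y i = x i := fun i => rfl
  rw [h1, b.repr.norm_map, ← h2]
  exact Finset.sum_congr rfl fun i _ => by rw [h3]

lemma gdens_rotT (d : ℕ) (b : OrthonormalBasis (Fin d) ℝ (EuclideanSpace ℝ (Fin d)))
    (x : Fin d → ℝ) : gdens d (rotT d b x) = gdens d x := by
  unfold gdens
  rw [prod_pdf_eq, prod_pdf_eq, sum_sq_rotT]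

lemma rotT_measurePreserving (d : ℕ)
    (b : OrthonormalBasis (Fin d) ℝ (EuclideanSpace ℝ (Fin d))) :
    MeasurePreserving (rotT d b) (volume : Measure (Fin d → ℝ)) volume := by
  have h1 := (EuclideanSpace.volume_preserving_symm_measurableEquiv_toLp (Fin d)).symm
  have h2 := b.measurePreserving_measurableEquiv
  have h3 := EuclideanSpace.volume_preserving_symm_measurableEquiv_toLp (Fin d)
  exact (h3.comp h2).comp h1

lemma map_rotT_pi (d : ℕ) (b : OrthonormalBasis (Fin d) ℝ (EuclideanSpace ℝ (Fin d))) :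
    Measure.map (rotT d b) (Measure.pi fun _ : Fin d => gaussianReal 0 1)
      = Measure.pi fun _ : Fin d => gaussianReal 0 1 := by
  ext s hs
  rw [(rotT d b).map_apply, pi_gauss_eq,
    withDensity_apply _ (hs.preimage (rotT d b).measurable)]
  have : ∫⁻ x in (rotT d b) ⁻¹' s, gdens d x
      = ∫⁻ x in (rotT d b) ⁻¹' s, gdens d (rotT d b x) := by
    exact lintegral_congr fun x => (gdens_rotT d b x).symm
  rw [this, ← setLIntegral_map hs (gdens_measurable d) (rotT d b).measurable,
    (rotT_measurePreserving d b).map_eq, ← withDensity_apply _ hs, ← pi_gauss_eq]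


-- marginal of pi gaussian
lemma lintegral_eval_sq (m : ℕ) (j : Fin m) :
    ∫⁻ y : Fin m → ℝ, ENNReal.ofReal ((y j) ^ 2)
      ∂(Measure.pi fun _ : Fin m => gaussianReal 0 1) = 1 := by
  have hmap : Measure.map (Function.eval j) (Measure.pi fun _ : Fin m => gaussianReal 0 1)
      = gaussianReal 0 1 := by
    ext s hs
    rw [Measure.map_apply (measurable_pi_apply j) hs]
    rw [Set.eval_preimage, Measure.pi_pi]
    rw [Finset.prod_eq_single j
      (fun i _ hij => by rw [Function.update_of_ne hij]; simp)
      (fun h => absurd (Finset.mem_univ j) h)]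
    rw [Function.update_self]
  have hlm := lintegral_map (f := fun s : ℝ => ENNReal.ofReal (s ^ 2))
    (μ := Measure.pi fun _ : Fin m => gaussianReal 0 1) (g := Function.eval j)
    (by exact (measurable_id.pow_const 2).ennreal_ofReal) (measurable_pi_apply j)
  rw [hmap, lintegral_sq_gaussian] at hlm
  exact hlm.symm


set_option maxHeartbeats 1000000 in
/-- If `x` is a random vector in `ℝ^d` (`d ≥ 3`) with i.i.d. standard Gaussian coordinates,
then for every nonzero `w ∈ ℝ^d` and every real `a`,
`P[⟨x,w⟩² < a²·‖x‖²] ≤ (2√d/√π)·|a|/‖w‖`. -/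
theorem stmt_7 {Ω : Type*} [MeasurableSpace Ω] (μ : Measure Ω) [IsProbabilityMeasure μ]
    (d : ℕ) (hd : 3 ≤ d) (X : Ω → Fin d → ℝ) (hX : Measurable X)
    (hlaw : Measure.map X μ = Measure.pi fun _ : Fin d => gaussianReal 0 1)
    (w : Fin d → ℝ) (hw : w ≠ 0) (a : ℝ) :
    μ {ω | (∑ i, X ω i * w i) ^ 2 < a ^ 2 * ∑ i, X ω i ^ 2}
      ≤ ENNReal.ofReal ((2 * Real.sqrt d / Real.sqrt Real.pi) * |a|
          / Real.sqrt (∑ i, w i ^ 2)) := by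
  obtain ⟨m, rfl⟩ : ∃ m, d = m + 1 := ⟨d - 1, by omega⟩
  have hm : 2 ≤ m := by omega
  have hmR : (2:ℝ) ≤ (m:ℝ) := by exact_mod_cast hm
  have hπ : 0 < Real.pi := Real.pi_pos
  have hsum : 0 < ∑ i, w i ^ 2 := by
    obtain ⟨i, hi⟩ := Function.ne_iff.1 hw
    have habs : 0 < |w i| := abs_pos.2 hi
    exact Finset.sum_pos' (fun i _ => sq_nonneg _)
      ⟨i, Finset.mem_univ i, by nlinarith [sq_abs (w i)]⟩
  set W := Real.sqrt (∑ i, w i ^ 2) with hWdef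
  have hW : 0 < W := Real.sqrt_pos.2 hsum
  set t := |a| / W with htdef
  have ht0 : 0 ≤ t := div_nonneg (abs_nonneg a) hW.le
  have hcast : Real.sqrt ((m+1 : ℕ) : ℝ) = Real.sqrt ((m:ℝ)+1) := by push_cast; rfl
  have hRHS : (2 * Real.sqrt ((m+1 : ℕ) : ℝ) / Real.sqrt Real.pi) * |a| / W
      = 2 * Real.sqrt ((m:ℝ)+1) / Real.sqrt Real.pi * t := by rw [htdef, hcast]; ring
  rw [hRHS]
  by_cases hbig : 1 ≤ 2 * Real.sqrt ((m:ℝ)+1) / Real.sqrt Real.pi * t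
  · exact le_trans prob_le_one (ENNReal.one_le_ofReal.mpr hbig)
  push_neg at hbig
  -- numeric consequences
  have hsπ : 0 < Real.sqrt Real.pi := Real.sqrt_pos.2 hπ
  have hsm1 : 0 < Real.sqrt ((m:ℝ)+1) := Real.sqrt_pos.2 (by positivity)
  have h2dt : 2 * Real.sqrt ((m:ℝ)+1) * t < Real.sqrt Real.pi := by
    rw [div_mul_eq_mul_div, div_lt_one hsπ] at hbig
    linarith
  have ht2 : 4 * ((m:ℝ)+1) * t^2 < Real.pi := by
    have h1 : (2 * Real.sqrt ((m:ℝ)+1) * t)^2 < (Real.sqrt Real.pi)^2 := by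
      apply pow_lt_pow_left₀ h2dt (by positivity)
      norm_num
    rw [Real.sq_sqrt hπ.le] at h1
    nlinarith [Real.sq_sqrt (show (0:ℝ) ≤ (m:ℝ)+1 by positivity)]
  have htlt1 : t^2 < 1 := by nlinarith [Real.pi_lt_d2, sq_nonneg t]
  have h1t : 0 < 1 - t^2 := by linarith
  -- reduce to the pi measure
  have hfA : Measurable fun x : Fin (m+1) → ℝ => (∑ i, x i * w i)^2 :=
    (Finset.measurable_sum Finset.univ
      (fun i _ => by fun_prop)).pow_const 2
  have hgA : Measurable fun x : Fin (m+1) → ℝ => a^2 * ∑ i, (x i)^2 :=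
    (Finset.measurable_sum Finset.univ
      (fun i _ => (measurable_pi_apply i).pow_const 2)).const_mul (a^2)
  have hAmeas : MeasurableSet
      {x : Fin (m+1) → ℝ | (∑ i, x i * w i)^2 < a^2 * ∑ i, (x i)^2} :=
    measurableSet_lt hfA hgA
  have hμ : μ {ω | (∑ i, X ω i * w i) ^ 2 < a ^ 2 * ∑ i, X ω i ^ 2}
      = Measure.pi (fun _ : Fin (m+1) => gaussianReal 0 1)
          {x | (∑ i, x i * w i)^2 < a^2 * ∑ i, (x i)^2} := by
    rw [← hlaw, Measure.map_apply hX hAmeas]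
    rfl
  rw [hμ]
  -- Euclidean setup
  set w' : EuclideanSpace ℝ (Fin (m+1)) :=
    (MeasurableEquiv.toLp 2 (Fin (m+1) → ℝ)) w with hw'def
  have hWnorm : ‖w'‖ = W := by
    rw [EuclideanSpace.norm_eq]
    congr 1
    exact Finset.sum_congr rfl fun i _ => by rw [Real.norm_eq_abs, sq_abs]; rfl
  set u : EuclideanSpace ℝ (Fin (m+1)) := W⁻¹ • w' with hudef
  have huapp : ∀ i, u i = W⁻¹ * w i := fun i => rfl
  have hu : ‖u‖ = 1 := by
    rw [hudef, norm_smul, hWnorm, Real.norm_eq_abs, abs_of_pos (inv_pos.2 hW),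
      inv_mul_cancel₀ hW.ne']
  have hcard : Module.finrank ℝ (EuclideanSpace ℝ (Fin (m+1))) = Fintype.card (Fin (m+1)) := by
    simp [finrank_euclideanSpace_fin]
  have horth : Orthonormal ℝ (({0} : Set (Fin (m+1))).restrict (fun _ => u)) := by
    constructor
    · intro i; exact hu
    · intro i j hij
      exact absurd (Subtype.ext (by
        have hi := i.2; have hj := j.2
        simp only [Set.mem_singleton_iff] at hi hj
        rw [hi, hj])) hij
  obtain ⟨b, hb⟩ := Orthonormal.exists_orthonormalBasis_extension_of_card_eq hcard horth
  have hb0 : b 0 = u := hb 0 rfl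
  have hrot0 : ∀ x : Fin (m+1) → ℝ, rotT (m+1) b x 0 = W⁻¹ * ∑ i, x i * w i := by
    intro x
    rw [rotT_apply, OrthonormalBasis.repr_apply_apply, hb0]
    rw [PiLp.inner_apply]
    simp only [RCLike.inner_apply, conj_trivial]
    rw [Finset.mul_sum]
    exact Finset.sum_congr rfl fun i _ => by
      rw [huapp, show ((MeasurableEquiv.toLp 2 (Fin (m+1) → ℝ)) x) i = x i from rfl]
      ring
  -- event iff
  have hW2 : (0:ℝ) < W^2 := by positivity
  have ht2W : t^2 = a^2 / W^2 := by rw [htdef, div_pow, sq_abs]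
  have hiff : ∀ s S : ℝ, ((W⁻¹ * s)^2 < t^2 * S ↔ s^2 < a^2 * S) := by
    intro s S
    rw [mul_pow, inv_pow, inv_mul_eq_div, ht2W, div_mul_eq_mul_div, div_lt_div_iff₀ hW2 hW2]
    constructor <;> intro h <;> nlinarith
  set B := {y : Fin (m+1) → ℝ | (y 0)^2 < t^2 * ∑ i, (y i)^2} with hB
  have hAB : {x : Fin (m+1) → ℝ | (∑ i, x i * w i)^2 < a^2 * ∑ i, (x i)^2}
      = rotT (m+1) b ⁻¹' B := by
    ext x
    simp only [hB, Set.mem_setOf_eq, Set.mem_preimage]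
    rw [hrot0 x, sum_sq_rotT, hiff]
  rw [hAB, ← MeasurableEquiv.map_apply (rotT (m+1) b), map_rotT_pi]
  -- decompose the first coordinate
  set c2 := t^2 / (1 - t^2) with hc2
  have hc2nn : 0 ≤ c2 := div_nonneg (sq_nonneg t) h1t.le
  set C := {p : ℝ × (Fin m → ℝ) | p.1^2 < c2 * ∑ j, (p.2 j)^2} with hC
  set e := MeasurableEquiv.piFinSuccAbove (fun _ : Fin (m+1) => ℝ) 0 with he
  have harith : ∀ s0 S : ℝ, (s0 < t^2 * (s0 + S) ↔ s0 < c2 * S) := by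
    intro s0 S
    rw [hc2, div_mul_eq_mul_div, lt_div_iff₀ h1t]
    constructor <;> intro h <;> nlinarith
  have hBC : B = e ⁻¹' C := by
    ext y
    simp only [hB, hC, Set.mem_setOf_eq, Set.mem_preimage,
      MeasurableEquiv.piFinSuccAbove_apply]
    rw [Fin.sum_univ_succAbove (fun i => (y i)^2) 0]
    exact harith ((y 0)^2) _
  have hCmeas : MeasurableSet C := by
    refine measurableSet_lt ((measurable_fst.pow_const 2)) ?_
    exact (Finset.measurable_sum Finset.univ
      (fun j _ => ((measurable_pi_apply j).comp measurable_snd).pow_const 2)).const_mul c2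
  have hprod := measurePreserving_piFinSuccAbove (fun _ : Fin (m+1) => gaussianReal 0 1) 0
  rw [hBC, ← MeasurableEquiv.map_apply e, hprod.map_eq]
  rw [Measure.prod_apply_symm hCmeas]
  have hpre : ∀ y : Fin m → ℝ, (fun x : ℝ => (x, y)) ⁻¹' C
      = {s : ℝ | s^2 < c2 * ∑ j, (y j)^2} := fun y => rfl
  simp_rw [hpre]
  set K := 2 * Real.sqrt c2 / Real.sqrt (2*Real.pi) with hK
  have hKnn : 0 ≤ K := by positivity
  have hm0 : (0:ℝ) < (m:ℝ) := by linarith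
  have hsqm : 0 < Real.sqrt (m:ℝ) := Real.sqrt_pos.2 hm0
  have hKd : 0 ≤ K / (2*Real.sqrt (m:ℝ)) := by positivity
  have step1 : ∀ y : Fin m → ℝ, gaussianReal 0 1 {s : ℝ | s^2 < c2 * ∑ j, (y j)^2}
      ≤ ENNReal.ofReal (K/(2*Real.sqrt (m:ℝ)) * ((∑ j, (y j)^2) + (m:ℝ))) := by
    intro y
    refine le_trans (gaussian_anticoncentration _) (ENNReal.ofReal_le_ofReal ?_)
    have hS : 0 ≤ ∑ j, (y j)^2 := Finset.sum_nonneg fun j _ => sq_nonneg _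
    rw [Real.sqrt_mul hc2nn _]
    have h2 : 2 * (Real.sqrt c2 * Real.sqrt (∑ j, (y j)^2)) / Real.sqrt (2*Real.pi)
        = K * Real.sqrt (∑ j, (y j)^2) := by rw [hK]; ring
    rw [h2]
    have amgm : 2 * Real.sqrt (∑ j, (y j)^2) * Real.sqrt (m:ℝ) ≤ (∑ j, (y j)^2) + (m:ℝ) := by
      nlinarith [sq_nonneg (Real.sqrt (∑ j, (y j)^2) - Real.sqrt (m:ℝ)),
        Real.sq_sqrt hS, Real.sq_sqrt hm0.le]
    have hId : K * Real.sqrt (∑ j, (y j)^2)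
        = K/(2*Real.sqrt (m:ℝ)) * (2 * Real.sqrt (∑ j, (y j)^2) * Real.sqrt (m:ℝ)) := by
      field_simp
    rw [hId]
    exact mul_le_mul_of_nonneg_left amgm hKd
  have step2 : (∫⁻ y, gaussianReal 0 1 {s : ℝ | s^2 < c2 * ∑ j, (y j)^2}
        ∂(Measure.pi fun _ : Fin m => gaussianReal 0 1))
      ≤ ENNReal.ofReal (K/(2*Real.sqrt (m:ℝ)))
          * (ENNReal.ofReal (m:ℝ) + ENNReal.ofReal (m:ℝ)) := by
    refine le_trans (lintegral_mono fun y => step1 y) ?_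
    have heq : ∀ y : Fin m → ℝ,
        ENNReal.ofReal (K/(2*Real.sqrt (m:ℝ)) * ((∑ j, (y j)^2) + (m:ℝ)))
          = ENNReal.ofReal (K/(2*Real.sqrt (m:ℝ)))
              * (ENNReal.ofReal (∑ j, (y j)^2) + ENNReal.ofReal (m:ℝ)) := by
      intro y
      rw [ENNReal.ofReal_mul hKd,
        ENNReal.ofReal_add (Finset.sum_nonneg fun j _ => sq_nonneg _) hm0.le]
    simp_rw [heq]
    have hmeasS : Measurable fun y : Fin m → ℝ => ENNReal.ofReal (∑ j, (y j)^2) :=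
      (Finset.measurable_sum Finset.univ
        (fun j _ => (measurable_pi_apply j).pow_const 2)).ennreal_ofReal
    rw [lintegral_const_mul (f := fun y : Fin m → ℝ => ENNReal.ofReal (∑ j, (y j)^2) + ENNReal.ofReal (m:ℝ)) _ (hmeasS.add measurable_const)]
    refine mul_le_mul_right ?_ _
    rw [lintegral_add_right _ measurable_const, lintegral_const, measure_univ, mul_one]
    refine add_le_add ?_ le_rfl
    have hsum2 : ∀ y : Fin m → ℝ, ENNReal.ofReal (∑ j, (y j)^2)
        = ∑ j, ENNReal.ofReal ((y j)^2) :=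
      fun y => ENNReal.ofReal_sum_of_nonneg (fun j _ => sq_nonneg _)
    simp_rw [hsum2]
    rw [lintegral_finset_sum _
      (fun j _ => ((measurable_pi_apply j).pow_const 2).ennreal_ofReal)]
    simp_rw [lintegral_eval_sq]
    simp [ENNReal.ofReal_natCast]
  refine le_trans step2 ?_
  have step3 : ENNReal.ofReal (K/(2*Real.sqrt (m:ℝ)))
        * (ENNReal.ofReal (m:ℝ) + ENNReal.ofReal (m:ℝ))
      = ENNReal.ofReal (K/(2*Real.sqrt (m:ℝ)) * ((m:ℝ) + (m:ℝ))) := by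
    rw [← ENNReal.ofReal_add hm0.le hm0.le, ← ENNReal.ofReal_mul hKd]
  have hreal1 : K/(2*Real.sqrt (m:ℝ)) * ((m:ℝ) + (m:ℝ)) = K * Real.sqrt (m:ℝ) := by
    have hms : (m:ℝ) = Real.sqrt (m:ℝ) * Real.sqrt (m:ℝ) := (Real.mul_self_sqrt hm0.le).symm
    rw [hms]
    field_simp
    rw [Real.sqrt_sq (Real.sqrt_nonneg _)]; ring
  -- the final real inequality
  have hq : 0 < Real.sqrt (1-t^2) := Real.sqrt_pos.2 h1t
  have hsc2 : Real.sqrt c2 = t / Real.sqrt (1-t^2) := by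
    rw [hc2, Real.sqrt_div (sq_nonneg t), Real.sqrt_sq ht0]
  have hs2 : (0:ℝ) < Real.sqrt 2 := by positivity
  have hs2pi : Real.sqrt (2*Real.pi) = Real.sqrt 2 * Real.sqrt Real.pi :=
    Real.sqrt_mul (by norm_num) _
  have hkey : Real.sqrt (m:ℝ) ≤ Real.sqrt 2 * Real.sqrt (1-t^2) * Real.sqrt ((m:ℝ)+1) := by
    have hkey2 : (m:ℝ) ≤ 2*(1-t^2)*((m:ℝ)+1) := by
      nlinarith [Real.pi_le_four]
    calc Real.sqrt (m:ℝ) ≤ Real.sqrt (2*(1-t^2)*((m:ℝ)+1)) := Real.sqrt_le_sqrt hkey2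
      _ = Real.sqrt 2 * Real.sqrt (1-t^2) * Real.sqrt ((m:ℝ)+1) := by
          rw [Real.sqrt_mul (by positivity), Real.sqrt_mul (by norm_num)]
  have hfinal : K * Real.sqrt (m:ℝ) ≤ 2 * Real.sqrt ((m:ℝ)+1) / Real.sqrt Real.pi * t := by
    rw [hK, hsc2, hs2pi]
    have hL : 2 * (t / Real.sqrt (1-t^2)) / (Real.sqrt 2 * Real.sqrt Real.pi) * Real.sqrt (m:ℝ)
        = (2*t*Real.sqrt (m:ℝ)) / (Real.sqrt (1-t^2) * Real.sqrt 2 * Real.sqrt Real.pi) := by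
      field_simp
      try simp
    have hR : 2 * Real.sqrt ((m:ℝ)+1) / Real.sqrt Real.pi * t
        = (2*t*(Real.sqrt 2 * Real.sqrt (1-t^2) * Real.sqrt ((m:ℝ)+1)))
            / (Real.sqrt (1-t^2) * Real.sqrt 2 * Real.sqrt Real.pi) := by
      field_simp
      try simp
    rw [hL, hR]
    refine (div_le_div_iff_of_pos_right (by positivity)).2 ?_
    exact mul_le_mul_of_nonneg_left hkey (by positivity)
  calc ENNReal.ofReal (K/(2*Real.sqrt (m:ℝ)))
        * (ENNReal.ofReal (m:ℝ) + ENNReal.ofReal (m:ℝ))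
      = ENNReal.ofReal (K/(2*Real.sqrt (m:ℝ)) * ((m:ℝ) + (m:ℝ))) := step3
    _ = ENNReal.ofReal (K * Real.sqrt (m:ℝ)) := by rw [hreal1]
    _ ≤ ENNReal.ofReal (2 * Real.sqrt ((m:ℝ)+1) / Real.sqrt Real.pi * t) :=
        ENNReal.ofReal_le_ofReal hfinal
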